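/- If an eGDN G is a finite directed acyclic bipartite graph of operation and slot nodes where no two distinct operation nodes share an output slot, and each operation node's populate function produces outputs consistent with its semantics function, then executing the operation nodes in any topological order of the induced dependency graph (where o₁ precedes o₂ if some output slot of o₁ is an input slot of o₂) yields a final valuation val such that every operation node o satisfies o.valid(val). -/

import Mathlib

private lemma foldl_frame {O S C : Type*}
    (outS : O → Set S) (exec : O → (S → C) → (S → C))
    (hframe : ∀ o v s, s ∉ outS o → exec o v s = v s) :
    ∀ (l : List O) (v : S → C) (s : S), (∀ o ∈ l, s ∉ outS o) →
      (l.foldl (fun v o' => exec o' v) v) s = v s := by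
  intro l
  induction l with
  | nil => intro v s _; rfl
  | cons a t ih =>
    intro v s h
    simp only [List.foldl_cons]
    rw [ih _ s (fun o ho => h o (List.mem_cons_of_mem _ ho)),
      hframe a v s (h a List.mem_cons_self)]

/-- An eGDN whose operation nodes `O` have input slots `inS o` and output slots
`outS o` among the slots `S`, a validity predicate `valid o` on valuations
(depending only on the slots adjacent to `o`), and an execution function `exec`
(the populate function) modifying only the output slots and establishing
validity.  If the induced dependency relation (`o₁` precedes `o₂` if some
output slot of `o₁` is an input slot of `o₂`) is respected by the execution
order `R` (a topological order) and distinct operation nodes do not share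
output slots, then after executing all operation nodes in the order `R` every
operation node is valid. -/
theorem stmt7 {O S C : Type*} [DecidableEq O]
    (inS outS : O → Set S)
    (valid : O → (S → C) → Prop)
    (exec : O → (S → C) → (S → C))
    (R : List O) (hnd : R.Nodup) (hall : ∀ o, o ∈ R)
    -- `R` is a topological order of the induced dependency graph:
    (htopo : ∀ o₁ o₂, (outS o₁ ∩ inS o₂).Nonempty → R.idxOf o₁ < R.idxOf o₂)
    -- distinct operation nodes have disjoint output slot sets:
    (hdisj : ∀ o₁ o₂, o₁ ≠ o₂ → outS o₁ ∩ outS o₂ = ∅)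
    -- executing `o` modifies only the contents of `o`'s output slots:
    (hframe : ∀ o v s, s ∉ outS o → exec o v s = v s)
    -- executing `o` establishes `o.valid` (the populate function produces
    -- outputs consistent with the semantics function):
    (hvalid : ∀ o v, valid o (exec o v))
    -- `o.valid` depends only on the contents of the slots adjacent to `o`:
    (hlocal : ∀ o v v', (∀ s ∈ inS o ∪ outS o, v s = v' s) →
      valid o v → valid o v')
    (val : S → C) :
    ∀ o, valid o (R.foldl (fun v o' => exec o' v) val) := by
  intro o
  obtain ⟨l₁, l₂, hR⟩ := List.append_of_mem (hall o)
  subst hR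
  rw [List.foldl_append, List.foldl_cons]
  have hnd' := hnd
  rw [List.nodup_append] at hnd'
  obtain ⟨hnd₁, hnd₂, hdisj'⟩ := hnd'
  have ho₁ : o ∉ l₁ := fun h => hdisj' o h o List.mem_cons_self rfl
  have hidx : (l₁ ++ o :: l₂).idxOf o = l₁.length := by
    rw [List.idxOf_append_of_notMem ho₁, List.idxOf_cons_self]
    simp
  refine hlocal o (exec o (List.foldl (fun v o' => exec o' v) val l₁)) _
    (fun s hs => ?_) (hvalid o _)
  refine (foldl_frame outS exec hframe l₂ _ s (fun o' ho' => ?_)).symm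
  have hne : o' ≠ o := fun h => (List.nodup_cons.mp hnd₂).1 (h ▸ ho')
  have ho'₁ : o' ∉ l₁ := fun h => hdisj' o' h o' (List.mem_cons_of_mem _ ho') rfl
  have hidx' : l₁.length < (l₁ ++ o :: l₂).idxOf o' := by
    rw [List.idxOf_append_of_notMem ho'₁, List.idxOf_cons_ne _ hne.symm]
    omega
  intro hmem
  rcases hs with hs | hs
  · exact absurd (htopo o' o ⟨s, hmem, hs⟩) (by omega)
  · exact Set.eq_empty_iff_forall_notMem.mp (hdisj o' o hne) s ⟨hmem, hs⟩
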